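/- Let students be partitioned into 30 previous companies with sizes n_1, …, n_30, each n_c ≤ 58, and suppose each student is reassigned to one of the 29 companies other than their own. Then the total number of unordered pairs of students sharing both a previous company and a new company is at least ∑_c max(n_c − 29, 0), and this bound is attained when additionally every n_c ≥ 29. -/

import Mathlib

open Finset

lemma choose_two_ge (k : ℕ) : k - 1 ≤ k.choose 2 := by
  match k with
  | 0 => simp
  | 1 => simp
  | (m+2) =>
    rw [Nat.choose_two_right]
    have h : 2 * (m+1) ≤ (m+2) * (m+1) := by nlinarith
    calc m + 2 - 1 = 2 * (m+1) / 2 := by omega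
      _ ≤ (m+2)*(m+1)/2 := Nat.div_le_div_right h

lemma pairCount (A : Type) [Fintype A] [DecidableEq A] (prev f : A → Fin 30) :
    (((Finset.univ : Finset A).powersetCard 2).filter
      (fun s => (∃ c : Fin 30, ∀ a ∈ s, prev a = c) ∧
                (∃ c : Fin 30, ∀ a ∈ s, f a = c))).card
    = ∑ p : Fin 30 × Fin 30,
        ((Finset.univ.filter (fun a => prev a = p.1 ∧ f a = p.2)).card).choose 2 := by
  have key : (((Finset.univ : Finset A).powersetCard 2).filter
      (fun s => (∃ c : Fin 30, ∀ a ∈ s, prev a = c) ∧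
                (∃ c : Fin 30, ∀ a ∈ s, f a = c)))
    = (univ : Finset (Fin 30 × Fin 30)).biUnion (fun p =>
        (univ.filter (fun a => prev a = p.1 ∧ f a = p.2)).powersetCard 2) := by
    ext s
    simp only [mem_filter, mem_powersetCard, mem_biUnion, mem_univ, true_and,
      Finset.subset_iff, mem_filter]
    constructor
    · rintro ⟨⟨hsub, hcard⟩, ⟨c, hc⟩, ⟨c', hc'⟩⟩
      refine ⟨(c, c'), ?_, hcard⟩
      intro a ha
      exact ⟨hc a ha, hc' a ha⟩
    · rintro ⟨p, hsub, hcard⟩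
      refine ⟨⟨fun {a} _ => trivial, hcard⟩, ⟨p.1, fun a ha => ?_⟩, ⟨p.2, fun a ha => ?_⟩⟩
      · exact (hsub ha).1
      · exact (hsub ha).2
  rw [key, card_biUnion]
  · exact Finset.sum_congr rfl (fun p _ => Finset.card_powersetCard 2 _)
  · intro p _ q _ hpq
    simp only [Function.onFun]
    rw [Finset.disjoint_left]
    intro s hs hs'
    rw [mem_powersetCard] at hs hs'
    obtain ⟨a, ha⟩ := Finset.card_pos.mp (by rw [hs.2]; norm_num)
    have h1 := hs.1 ha; have h2 := hs'.1 ha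
    rw [mem_filter] at h1 h2
    exact hpq (Prod.ext (h1.2.1.symm.trans h2.2.1) (h1.2.2.symm.trans h2.2.2))

theorem stmt15 (n : Fin 30 → ℕ) (h58 : ∀ c, n c ≤ 58) :
    (∀ (A : Type) [Fintype A] [DecidableEq A] (prev f : A → Fin 30),
      (∀ c : Fin 30, ((Finset.univ : Finset A).filter (fun a => prev a = c)).card = n c) →
      (∀ a, f a ≠ prev a) →
      ∑ c, max (n c - 29) 0 ≤
        (((Finset.univ : Finset A).powersetCard 2).filter
          (fun s => (∃ c : Fin 30, ∀ a ∈ s, prev a = c) ∧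
                    (∃ c : Fin 30, ∀ a ∈ s, f a = c))).card) ∧
    ((∀ c, 29 ≤ n c) →
      ∃ f : (Σ c : Fin 30, Fin (n c)) → Fin 30,
        (∀ a, f a ≠ a.1) ∧
        (((Finset.univ : Finset (Σ c : Fin 30, Fin (n c))).powersetCard 2).filter
          (fun s => (∃ c : Fin 30, ∀ a ∈ s, a.1 = c) ∧
                    (∃ c : Fin 30, ∀ a ∈ s, f a = c))).card
          = ∑ c, max (n c - 29) 0) := by
  constructor
  · intro A _ _ prev f hn hf
    rw [pairCount, Fintype.sum_prod_type]
    have hc : ∀ c, n c - 29 ≤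
        ∑ c' : Fin 30, ((univ.filter (fun a => prev a = c ∧ f a = c')).card).choose 2 := by
      intro c
      set k : Fin 30 → ℕ := fun c' => (univ.filter (fun a => prev a = c ∧ f a = c')).card with hk
      have hsum : ∑ c', k c' = n c := by
        rw [← hn c,
          Finset.card_eq_sum_card_fiberwise (f := f) (t := univ) (fun a _ => mem_univ _)]
        refine Finset.sum_congr rfl fun c' _ => ?_
        rw [Finset.filter_filter]
      have hkc : k c = 0 := by
        simp only [hk, Finset.card_eq_zero, Finset.filter_eq_empty_iff]
        rintro a - ⟨h1, h2⟩
        exact hf a (h2.trans h1.symm)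
      have h1 : ∑ c' ∈ univ.erase c, k c' = n c := by
        rw [← hsum, ← Finset.add_sum_erase _ k (mem_univ c), hkc, zero_add]
      have h2 : ∑ c' ∈ univ.erase c, k c' ≤ ∑ c' ∈ univ.erase c, ((k c').choose 2 + 1) :=
        Finset.sum_le_sum fun c' _ => by have := choose_two_ge (k c'); omega
      rw [Finset.sum_add_distrib, Finset.sum_const] at h2
      have hcard : (univ.erase c).card = 29 := by
        rw [Finset.card_erase_of_mem (mem_univ c)]; simp
      rw [hcard] at h2
      have h3 : ∑ c' ∈ univ.erase c, (k c').choose 2 ≤ ∑ c', (k c').choose 2 :=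
        Finset.sum_le_sum_of_subset (Finset.erase_subset _ _)
      simp only [smul_eq_mul, mul_one] at h2
      have h4 : ∑ c' : Fin 30,
          ((univ.filter (fun a => prev a = c ∧ f a = c')).card).choose 2
          = ∑ c', (k c').choose 2 := rfl
      omega
    calc ∑ c, max (n c - 29) 0 = ∑ c, (n c - 29) :=
          Finset.sum_congr rfl fun c _ => Nat.max_eq_left (Nat.zero_le _)
      _ ≤ _ := Finset.sum_le_sum fun c _ => hc c
  · intro h29
    set F : (Σ c : Fin 30, Fin (n c)) → Fin 30 :=
      fun a => a.1.succAbove ⟨(a.2 : ℕ) % 29, Nat.mod_lt _ (by norm_num)⟩ with hF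
    refine ⟨F, fun a => Fin.succAbove_ne _ _, ?_⟩
    rw [pairCount (prev := fun a => a.1) (f := F), Fintype.sum_prod_type]
    refine Finset.sum_congr rfl fun c _ => ?_
    have hbij : ∀ c' : Fin 30,
        ((univ : Finset (Σ c : Fin 30, Fin (n c))).filter (fun a => a.1 = c ∧ F a = c')).card
        = ((univ : Finset (Fin (n c))).filter (fun i => F ⟨c, i⟩ = c')).card := by
      intro c'
      refine (Finset.card_bij (fun i _ => (⟨c, i⟩ : Σ c, Fin (n c))) ?_ ?_ ?_).symm
      · intro i hi
        simp only [mem_filter, mem_univ, true_and] at hi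
        exact mem_filter.mpr ⟨mem_univ _, rfl, hi⟩
      · intro i _ i' _ h
        injection h
      · rintro ⟨ca, ia⟩ ha
        simp only [mem_filter, mem_univ, true_and] at ha
        obtain ⟨rfl, hfa⟩ := ha
        exact ⟨ia, mem_filter.mpr ⟨mem_univ _, hfa⟩, rfl⟩
    simp only [hbij]
    rw [Fin.sum_univ_succAbove
      (fun c' => (((univ : Finset (Fin (n c))).filter (fun i => F ⟨c, i⟩ = c')).card).choose 2) c]
    have hzero : ((univ : Finset (Fin (n c))).filter (fun i => F ⟨c, i⟩ = c)) = ∅ := by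
      rw [Finset.filter_eq_empty_iff]
      intro i _
      simp only [hF]
      exact Fin.succAbove_ne _ _
    rw [hzero]
    simp only [Finset.card_empty, Nat.choose_zero_succ, zero_add]
    have hfilter : ∀ j : Fin 29,
        ((univ : Finset (Fin (n c))).filter (fun i => F ⟨c, i⟩ = c.succAbove j))
        = (univ : Finset (Fin (n c))).filter (fun i : Fin (n c) => (i : ℕ) % 29 = (j : ℕ)) := by
      intro j
      refine Finset.filter_congr fun i _ => ?_
      simp only [hF]
      rw [(Fin.succAbove_right_injective (p := c)).eq_iff, Fin.ext_iff]
    have hcard : ∀ j : Fin 29,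
        ((univ : Finset (Fin (n c))).filter (fun i : Fin (n c) => (i : ℕ) % 29 = (j : ℕ))).card
        = if (j : ℕ) + 29 < n c then 2 else 1 := by
      intro j
      have hj : (j : ℕ) < 29 := j.isLt
      have h29c := h29 c
      have h58c := h58 c
      by_cases h : (j : ℕ) + 29 < n c
      · rw [if_pos h]
        have heq : ((univ : Finset (Fin (n c))).filter (fun i : Fin (n c) => (i : ℕ) % 29 = (j : ℕ)))
            = {⟨(j : ℕ), by omega⟩, ⟨(j : ℕ) + 29, h⟩} := by
          ext i
          have := i.isLt
          simp only [mem_filter, mem_univ, true_and, Finset.mem_insert, Finset.mem_singleton,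
            Fin.ext_iff]
          omega
        rw [heq]
        rw [Finset.card_insert_of_notMem (by simp [Fin.ext_iff]), Finset.card_singleton]
      · rw [if_neg h]
        have heq : ((univ : Finset (Fin (n c))).filter (fun i : Fin (n c) => (i : ℕ) % 29 = (j : ℕ)))
            = {⟨(j : ℕ), by omega⟩} := by
          ext i
          have := i.isLt
          simp only [mem_filter, mem_univ, true_and, Finset.mem_singleton, Fin.ext_iff]
          omega
        rw [heq, Finset.card_singleton]
    have : ∑ j : Fin 29,
        ((((univ : Finset (Fin (n c))).filter (fun i => F ⟨c, i⟩ = c.succAbove j)).card).choose 2)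
        = ∑ j : Fin 29, (if (j : ℕ) + 29 < n c then 1 else 0) := by
      refine Finset.sum_congr rfl fun j _ => ?_
      rw [hfilter j, hcard j]
      split <;> rfl
    rw [this, Fin.sum_univ_eq_sum_range (fun j => if j + 29 < n c then 1 else 0) 29,
      ← Finset.card_filter]
    have hr : (Finset.range 29).filter (fun j => j + 29 < n c) = Finset.range (n c - 29) := by
      ext j
      have := h58 c
      simp only [Finset.mem_filter, Finset.mem_range]
      omega
    rw [hr, Finset.card_range, Nat.max_eq_left (Nat.zero_le _)]
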